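/- Let G be a Garside group of finite type and x, α ∈ G with inf(x^α) = inf(x) and sup(x^α) = sup(x), and let α^{(1)} be the transport of α at x. Then inf(α^{(1)}) ≥ inf(α) and sup(α^{(1)}) ≤ sup(α), hence ℓ(α^{(1)}) ≤ ℓ(α). In particular, if α is simple then so is α^{(1)}. -/

import Mathlib

namespace GarsidePaper

/-- A Garside structure of finite type on a group `G`: a positive submonoid `P` with
`P ∩ P⁻¹ = {1}`, a Garside element `Δ ∈ P`, the prefix order `a ≼ b ↔ a⁻¹b ∈ P`
a lattice order (with meet `wedge` and join `vee`), the simple elements `[1,Δ]`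
generating `G` and being finite, `Δ⁻¹PΔ = P`, a finite norm on positive elements,
and the infimum and supremum functions `inf`, `sup` characterised by
`Δ^(inf x) ≼ x ≼ Δ^(sup x)` with `inf x` maximal and `sup x` minimal. -/
structure Garside (G : Type*) [Group G] where
  P : Submonoid G
  Δ : G
  purity : ∀ a : G, a ∈ P → a⁻¹ ∈ P → a = 1
  delta_mem : Δ ∈ P
  wedge : G → G → G
  vee : G → G → G
  wedge_le_left : ∀ a b : G, (wedge a b)⁻¹ * a ∈ P
  wedge_le_right : ∀ a b : G, (wedge a b)⁻¹ * b ∈ P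
  le_wedge : ∀ a b c : G, c⁻¹ * a ∈ P → c⁻¹ * b ∈ P → c⁻¹ * wedge a b ∈ P
  le_vee_left : ∀ a b : G, a⁻¹ * vee a b ∈ P
  le_vee_right : ∀ a b : G, b⁻¹ * vee a b ∈ P
  vee_le : ∀ a b c : G, a⁻¹ * c ∈ P → b⁻¹ * c ∈ P → (vee a b)⁻¹ * c ∈ P
  simples_generate : Subgroup.closure {a : G | a ∈ P ∧ a⁻¹ * Δ ∈ P} = (⊤ : Subgroup G)
  conj_pos : ∀ a : G, a ∈ P → Δ⁻¹ * a * Δ ∈ P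
  norm : G → ℕ
  norm_exists : ∀ x : G, x ∈ P → x ≠ 1 →
    ∃ l : List G, (∀ s ∈ l, s ∈ P ∧ s ≠ 1) ∧ l.prod = x ∧ l.length = norm x
  norm_max : ∀ x : G, x ∈ P → x ≠ 1 →
    ∀ l : List G, (∀ s ∈ l, s ∈ P ∧ s ≠ 1) → l.prod = x → l.length ≤ norm x
  simples_finite : Set.Finite {a : G | a ∈ P ∧ a⁻¹ * Δ ∈ P}
  inf : G → ℤ
  sup : G → ℤ
  inf_le : ∀ x : G, (Δ ^ inf x)⁻¹ * x ∈ P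
  inf_max : ∀ (x : G) (p : ℤ), (Δ ^ p)⁻¹ * x ∈ P → p ≤ inf x
  le_sup : ∀ x : G, x⁻¹ * Δ ^ sup x ∈ P
  sup_min : ∀ (x : G) (q : ℤ), x⁻¹ * Δ ^ q ∈ P → sup x ≤ q

namespace Garside

variable {G : Type*} [Group G]

/-- The prefix order `a ≼ b`. -/
def le (S : Garside G) (a b : G) : Prop := a⁻¹ * b ∈ S.P

/-- The canonical length `ℓ(x) = sup(x) - inf(x)`. -/
def len (S : Garside G) (x : G) : ℤ := S.sup x - S.inf x

/-- The initial factor `ι(x) = (x Δ^(-inf x)) ∧ Δ`. -/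
def iota (S : Garside G) (x : G) : G := S.wedge (x * S.Δ ^ (-S.inf x)) S.Δ

/-- The preferred prefix `𝔭(x) = ι(x) ∧ ι(x⁻¹)`. -/
def pp (S : Garside G) (x : G) : G := S.wedge (S.iota x) (S.iota x⁻¹)

/-- Cyclic sliding `𝔰(x) = 𝔭(x)⁻¹ x 𝔭(x)`. -/
def sl (S : Garside G) (x : G) : G := (S.pp x)⁻¹ * x * S.pp x

/-- The final factor `φ(x) = (Δ^(sup x - 1) ∧ x)⁻¹ x`. -/
def phi (S : Garside G) (x : G) : G := (S.wedge (S.Δ ^ (S.sup x - 1)) x)⁻¹ * x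

/-- Conjugation by `Δ`: `τ(x) = Δ⁻¹ x Δ`. -/
def tau (S : Garside G) (x : G) : G := S.Δ⁻¹ * x * S.Δ

/-- Cycling `c(x) = ι(x)⁻¹ x ι(x)`. -/
def cyc (S : Garside G) (x : G) : G := (S.iota x)⁻¹ * x * S.iota x

/-- Decycling `d(x) = φ(x) x φ(x)⁻¹`. -/
def dec (S : Garside G) (x : G) : G := S.phi x * x * (S.phi x)⁻¹

/-- The transport `α^{(1)} = 𝔭(x)⁻¹ α 𝔭(x^α)` of `α` at `x`. -/
def transport (S : Garside G) (x α : G) : G := (S.pp x)⁻¹ * α * S.pp (α⁻¹ * x * α)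

/-- The iterated transport: `itTransport x i α = α^{(i)}`, the transport of `α^{(i-1)}`
at `𝔰^{i-1}(x)`, with `α^{(0)} = α`. -/
def itTransport (S : Garside G) (x : G) : ℕ → G → G
  | 0, α => α
  | i + 1, α => S.transport ((S.sl)^[i] x) (S.itTransport x i α)

/-- `𝔓_i(x) = 𝔭(x) 𝔭(𝔰(x)) ⋯ 𝔭(𝔰^{i-1}(x))`, with `𝔓₀(x) = 1`. -/
def PP (S : Garside G) (x : G) : ℕ → G
  | 0 => 1
  | i + 1 => S.PP x i * S.pp ((S.sl)^[i] x)

/-- The summit set `SS(x)`. -/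
def SS (S : Garside G) (x : G) : Set G :=
  {y | IsConj x y ∧ ∀ z : G, IsConj x z → S.inf z ≤ S.inf y}

/-- The super summit set `SSS(x)`. -/
def SSS (S : Garside G) (x : G) : Set G :=
  {y | IsConj x y ∧ (∀ z : G, IsConj x z → S.inf z ≤ S.inf y) ∧
       (∀ z : G, IsConj x z → S.sup y ≤ S.sup z)}

/-- The ultra summit set `USS(x)`. -/
def USS (S : Garside G) (x : G) : Set G :=
  {y | y ∈ S.SSS x ∧ ∃ m : ℕ, 1 ≤ m ∧ (S.cyc)^[m] y = y}

/-- The reduced super summit set `RSSS(x)`. -/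
def RSSS (S : Garside G) (x : G) : Set G :=
  {y | IsConj x y ∧ (∃ m : ℕ, 1 ≤ m ∧ (S.cyc)^[m] y = y) ∧
       (∃ n : ℕ, 1 ≤ n ∧ (S.dec)^[n] y = y)}

/-- The set of sliding circuits `SC(x)`. -/
def SC (S : Garside G) (x : G) : Set G :=
  {y | IsConj x y ∧ ∃ m : ℕ, 1 ≤ m ∧ (S.sl)^[m] y = y}


section Aux
variable (S : Garside G)

/-- Simples. -/
def Spl : Set G := {a : G | a ∈ S.P ∧ a⁻¹ * S.Δ ∈ S.P}

lemma mem_of_eq {a b : G} (h : a = b) (hb : b ∈ S.P) : a ∈ S.P := h ▸ hb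

lemma le_refl' (a : G) : S.le a a := by
  show a⁻¹ * a ∈ S.P; simpa using S.P.one_mem

lemma le_trans' {a b c : G} (h1 : S.le a b) (h2 : S.le b c) : S.le a c := by
  show a⁻¹ * c ∈ S.P
  exact S.mem_of_eq (by group) (S.P.mul_mem h1 h2)

lemma le_antisymm' {a b : G} (h1 : S.le a b) (h2 : S.le b a) : a = b := by
  have := S.purity (a⁻¹ * b) h1 (S.mem_of_eq (by group) h2)
  rwa [inv_mul_eq_one] at this

lemma le_mul_left (c : G) {a b : G} (h : S.le a b) : S.le (c * a) (c * b) :=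
  S.mem_of_eq (by group) h

lemma zpow_mem {k : ℤ} (hk : 0 ≤ k) : S.Δ ^ k ∈ S.P := by
  obtain ⟨n, rfl⟩ := Int.eq_ofNat_of_zero_le hk
  rw [zpow_natCast]
  exact pow_mem S.delta_mem n

lemma le_zpow {j k : ℤ} (h : j ≤ k) : S.le (S.Δ ^ j) (S.Δ ^ k) := by
  show (S.Δ ^ j)⁻¹ * S.Δ ^ k ∈ S.P
  exact S.mem_of_eq (by group) (S.zpow_mem (k := k - j) (by omega))

lemma delta_spl : S.Δ ∈ S.Spl := ⟨S.delta_mem, by simpa using S.P.one_mem⟩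

lemma tau_simple {a : G} (h : a ∈ S.Spl) : S.Δ⁻¹ * a * S.Δ ∈ S.Spl := by
  refine ⟨S.conj_pos a h.1, ?_⟩
  exact S.mem_of_eq (by group) (S.conj_pos _ h.2)

lemma tau_inv_simple {a : G} (h : a ∈ S.Spl) : S.Δ * a * S.Δ⁻¹ ∈ S.Spl := by
  have hmap : Set.MapsTo (fun x => S.Δ⁻¹ * x * S.Δ) S.Spl S.Spl := fun x hx => S.tau_simple hx
  have hinj : Set.InjOn (fun x => S.Δ⁻¹ * x * S.Δ) S.Spl := by
    intro x _ y _ hxy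
    have hx : x = S.Δ * (S.Δ⁻¹ * x * S.Δ) * S.Δ⁻¹ := by group
    rw [hx]; dsimp only at hxy; rw [hxy]; group
  have hbij := (S.simples_finite.injOn_iff_bijOn_of_mapsTo hmap).mp hinj
  obtain ⟨b, hb, he⟩ := hbij.surjOn h
  have : S.Δ * a * S.Δ⁻¹ = b := by dsimp only at he; rw [← he]; group
  rw [this]; exact hb

/-- Submonoid generated by simples -/
def M : Submonoid G := Submonoid.closure S.Spl

lemma M_le_P {a : G} (h : a ∈ S.M) : a ∈ S.P :=
  Submonoid.closure_le.mpr (fun _ hb => hb.1) h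

lemma tau_mem_M {a : G} (h : a ∈ S.M) : S.Δ⁻¹ * a * S.Δ ∈ S.M := by
  induction h using Submonoid.closure_induction with
  | mem x hx => exact Submonoid.subset_closure (S.tau_simple hx)
  | one =>
      have he : S.Δ⁻¹ * 1 * S.Δ = 1 := by group
      rw [he]; exact S.M.one_mem
  | mul x y hx hy ihx ihy =>
      have := S.M.mul_mem ihx ihy
      have he : S.Δ⁻¹ * (x * y) * S.Δ = (S.Δ⁻¹ * x * S.Δ) * (S.Δ⁻¹ * y * S.Δ) := by group
      rw [he]; exact this

lemma tau_inv_mem_M {a : G} (h : a ∈ S.M) : S.Δ * a * S.Δ⁻¹ ∈ S.M := by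
  induction h using Submonoid.closure_induction with
  | mem x hx => exact Submonoid.subset_closure (S.tau_inv_simple hx)
  | one =>
      have he : S.Δ * 1 * S.Δ⁻¹ = 1 := by group
      rw [he]; exact S.M.one_mem
  | mul x y hx hy ihx ihy =>
      have he : S.Δ * (x * y) * S.Δ⁻¹ = (S.Δ * x * S.Δ⁻¹) * (S.Δ * y * S.Δ⁻¹) := by group
      rw [he]; exact S.M.mul_mem ihx ihy

/-- Peeling a simple prefix off a product of simples stays in `M`. -/
lemma peel : ∀ (l : List G), (∀ s ∈ l, s ∈ S.Spl) → ∀ t, t ∈ S.Spl →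
    t⁻¹ * l.prod ∈ S.P → t⁻¹ * l.prod ∈ S.M := by
  intro l
  induction l with
  | nil =>
      intro _ t ht hle
      have ht1 : t = 1 := S.purity t ht.1 (by simpa using hle)
      rw [ht1]
      have : (1 : G)⁻¹ * List.prod [] = 1 := by simp
      rw [this]; exact S.M.one_mem
  | cons s l ih =>
      intro hl t ht hle
      have hs : s ∈ S.Spl := hl s List.mem_cons_self
      have hl' : ∀ x ∈ l, x ∈ S.Spl := fun x hx => hl x (List.mem_cons_of_mem s hx)
      have hv : l.prod ∈ S.P := S.M_le_P (Submonoid.list_prod_mem _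
        (fun x hx => Submonoid.subset_closure (hl' x hx)))
      rw [List.prod_cons] at hle ⊢
      -- u := S.vee t s
      have hu_le : (S.vee t s)⁻¹ * (s * l.prod) ∈ S.P :=
        S.vee_le t s (s * l.prod) hle (S.mem_of_eq (by group) hv)
      have hu_mem : S.vee t s ∈ S.P :=
        S.mem_of_eq (show S.vee t s = t * (t⁻¹ * S.vee t s) by group)
          (S.P.mul_mem ht.1 (S.le_vee_left t s))
      have hu_simple : (S.vee t s)⁻¹ * S.Δ ∈ S.P := S.vee_le t s S.Δ ht.2 hs.2
      -- c := t⁻¹ * u is simple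
      have hc : t⁻¹ * S.vee t s ∈ S.Spl := by
        refine ⟨S.le_vee_left t s, ?_⟩
        exact S.mem_of_eq (by group) (S.P.mul_mem hu_simple (S.conj_pos t ht.1))
      -- e := s⁻¹ * u is simple
      have he : s⁻¹ * S.vee t s ∈ S.Spl := by
        refine ⟨S.le_vee_right t s, ?_⟩
        exact S.mem_of_eq (by group) (S.P.mul_mem hu_simple (S.conj_pos s hs.1))
      -- e ≼ l.prod
      have he_le : (s⁻¹ * S.vee t s)⁻¹ * l.prod ∈ S.P :=
        S.mem_of_eq (by group) hu_le
      have hM := ih hl' (s⁻¹ * S.vee t s) he he_le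
      have key : t⁻¹ * (s * l.prod) =
          (t⁻¹ * S.vee t s) * ((s⁻¹ * S.vee t s)⁻¹ * l.prod) := by group
      rw [key]
      exact S.M.mul_mem (Submonoid.subset_closure hc) hM

/-- Normal form predicate: `g Δ^k` lies in `M` for some `k : ℕ`. -/
def C (g : G) : Prop := ∃ w ∈ S.M, ∃ k : ℕ, g * S.Δ ^ k = w

lemma C_tau_pow_M {w : G} (hw : w ∈ S.M) (k : ℕ) : (S.Δ ^ k)⁻¹ * w * S.Δ ^ k ∈ S.M := by
  induction k with
  | zero => simpa using hw
  | succ n ihn =>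
      have he : (S.Δ ^ (n+1))⁻¹ * w * S.Δ ^ (n+1) =
          S.Δ⁻¹ * ((S.Δ ^ n)⁻¹ * w * S.Δ ^ n) * S.Δ := by
        rw [pow_succ]; group
      rw [he]; exact S.tau_mem_M ihn

lemma C_mul {a b : G} (ha : S.C a) (hb : S.C b) : S.C (a * b) := by
  obtain ⟨w1, hw1, k1, he1⟩ := ha
  obtain ⟨w2, hw2, k2, he2⟩ := hb
  refine ⟨w1 * (S.Δ ^ k1)⁻¹ * w2 * S.Δ ^ k1, ?_, k2 + k1, ?_⟩
  · have h2 : (S.Δ ^ k1)⁻¹ * w2 * S.Δ ^ k1 ∈ S.M := S.C_tau_pow_M hw2 k1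
    have he : w1 * (S.Δ ^ k1)⁻¹ * w2 * S.Δ ^ k1 = w1 * ((S.Δ ^ k1)⁻¹ * w2 * S.Δ ^ k1) := by
      group
    rw [he]; exact S.M.mul_mem hw1 h2
  · rw [← he1, ← he2, pow_add]; group

lemma C_one : S.C 1 := ⟨1, S.M.one_mem, 0, by simp⟩

lemma C_deltapow (k : ℕ) : S.C (S.Δ ^ k) :=
  ⟨S.Δ ^ k, pow_mem (Submonoid.subset_closure S.delta_spl) k, 0, by simp⟩

lemma C_inv_of_M {w : G} (hw : w ∈ S.M) : S.C w⁻¹ := by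
  induction hw using Submonoid.closure_induction with
  | mem x hx =>
      refine ⟨x⁻¹ * S.Δ, Submonoid.subset_closure ?_, 1, by group⟩
      refine ⟨hx.2, ?_⟩
      exact S.mem_of_eq (by group) (S.conj_pos x hx.1)
  | one => simpa using S.C_one
  | mul x y hx hy ihx ihy =>
      have := S.C_mul ihy ihx
      have he : (x * y)⁻¹ = y⁻¹ * x⁻¹ := by group
      rw [he]; exact this

lemma C_inv {g : G} (hg : S.C g) : S.C g⁻¹ := by
  obtain ⟨w, hw, k, he⟩ := hg
  have hg' : g⁻¹ = S.Δ ^ k * w⁻¹ := by rw [← he]; group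
  rw [hg']
  exact S.C_mul (S.C_deltapow k) (S.C_inv_of_M hw)

lemma C_all (g : G) : S.C g := by
  have hg : g ∈ Subgroup.closure S.Spl := by
    rw [show S.Spl = {a : G | a ∈ S.P ∧ a⁻¹ * S.Δ ∈ S.P} from rfl, S.simples_generate]
    trivial
  induction hg using Subgroup.closure_induction with
  | mem x hx => exact ⟨x, Submonoid.subset_closure hx, 0, by simp⟩
  | one => exact S.C_one
  | mul x y hx hy ihx ihy => exact S.C_mul ihx ihy
  | inv x hx ihx => exact S.C_inv ihx

lemma P_le_M_aux : ∀ (k : ℕ) (a : G), a ∈ S.P → a * S.Δ ^ k ∈ S.M → a ∈ S.M := by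
  intro k
  induction k with
  | zero => intro a _ h; simpa using h
  | succ k ih =>
      intro a ha h
      have hw : S.Δ⁻¹ * (a * S.Δ ^ (k+1)) ∈ S.P := by
        have he : S.Δ⁻¹ * (a * S.Δ ^ (k+1)) = (S.Δ⁻¹ * a * S.Δ) * S.Δ ^ k := by
          rw [pow_succ]; group
        rw [he]; exact S.P.mul_mem (S.conj_pos a ha) (pow_mem S.delta_mem k)
      obtain ⟨l, hl, hlp⟩ := Submonoid.exists_list_of_mem_closure h
      have h2 : S.Δ⁻¹ * (a * S.Δ ^ (k+1)) ∈ S.M := by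
        have := S.peel l hl S.Δ S.delta_spl (by rw [hlp]; exact hw)
        rwa [hlp] at this
      have h3 := S.tau_inv_mem_M h2
      have he2 : a * S.Δ ^ k = S.Δ * (S.Δ⁻¹ * (a * S.Δ ^ (k+1))) * S.Δ⁻¹ := by
        rw [pow_succ]; group
      exact ih a ha (he2 ▸ h3)

lemma P_le_M {a : G} (ha : a ∈ S.P) : a ∈ S.M := by
  obtain ⟨w, hw, k, he⟩ := S.C_all a
  exact S.P_le_M_aux k a ha (he ▸ hw)

/-- THE key structural fact: conjugation by `Δ⁻¹` also preserves positivity. -/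
lemma tau_inv_pos {a : G} (ha : a ∈ S.P) : S.Δ * a * S.Δ⁻¹ ∈ S.P :=
  S.M_le_P (S.tau_inv_mem_M (S.P_le_M ha))

/-- Conjugation by `Δ^k`. -/
def cjf (k : ℤ) (x : G) : G := (S.Δ ^ k)⁻¹ * x * S.Δ ^ k

lemma cjf_cjf_neg (k : ℤ) (x : G) : S.cjf (-k) (S.cjf k x) = x := by
  unfold cjf; group

lemma cjf_cjf_neg' (k : ℤ) (x : G) : S.cjf k (S.cjf (-k) x) = x := by
  unfold cjf; group

lemma cjf_zpow (k m : ℤ) : S.cjf k (S.Δ ^ m) = S.Δ ^ m := by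
  unfold cjf; group

lemma cjf_delta (k : ℤ) : S.cjf k S.Δ = S.Δ := by
  have := S.cjf_zpow k 1
  simpa using this

lemma cjf_pos (k : ℤ) {a : G} (ha : a ∈ S.P) : S.cjf k a ∈ S.P := by
  induction k using Int.induction_on with
  | zero => unfold cjf; simpa using ha
  | succ n ih =>
      have he : S.cjf ((n : ℤ) + 1) a = S.Δ⁻¹ * (S.cjf n a) * S.Δ := by
        unfold cjf; rw [zpow_add_one]; group
      rw [he]; exact S.conj_pos _ ih
  | pred n ih =>
      have he : S.cjf (-(n : ℤ) - 1) a = S.Δ * (S.cjf (-(n : ℤ)) a) * S.Δ⁻¹ := by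
        unfold cjf; rw [zpow_sub_one]; group
      rw [he]; exact S.tau_inv_pos ih

lemma le_cjf (k : ℤ) {a b : G} (h : S.le a b) : S.le (S.cjf k a) (S.cjf k b) := by
  show (S.cjf k a)⁻¹ * S.cjf k b ∈ S.P
  exact S.mem_of_eq (show _ = S.cjf k (a⁻¹ * b) by unfold cjf; group) (S.cjf_pos k h)

lemma inf_le_cjf (k : ℤ) (x : G) : S.inf x ≤ S.inf (S.cjf k x) := by
  apply S.inf_max
  have h := S.le_cjf k (show S.le (S.Δ ^ S.inf x) x from S.inf_le x)
  rwa [S.cjf_zpow] at h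

lemma inf_cjf (k : ℤ) (x : G) : S.inf (S.cjf k x) = S.inf x := by
  refine le_antisymm ?_ (S.inf_le_cjf k x)
  have h := S.inf_le_cjf (-k) (S.cjf k x)
  rwa [S.cjf_cjf_neg] at h

lemma cjf_le_sup (k : ℤ) (x : G) : S.sup (S.cjf k x) ≤ S.sup x := by
  apply S.sup_min
  have h := S.le_cjf k (show S.le x (S.Δ ^ S.sup x) from S.le_sup x)
  rwa [S.cjf_zpow] at h

lemma sup_cjf (k : ℤ) (x : G) : S.sup (S.cjf k x) = S.sup x := by
  refine le_antisymm (S.cjf_le_sup k x) ?_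
  have h := S.cjf_le_sup (-k) (S.cjf k x)
  rwa [S.cjf_cjf_neg] at h

lemma inf_inv (x : G) : S.inf x⁻¹ = -S.sup x := by
  refine le_antisymm ?_ ?_
  · have h1 : x⁻¹ * S.Δ ^ (-(S.inf x⁻¹)) ∈ S.P :=
      S.mem_of_eq (show _ = S.cjf (-(S.inf x⁻¹)) ((S.Δ ^ S.inf x⁻¹)⁻¹ * x⁻¹)
        by unfold cjf; group) (S.cjf_pos _ (S.inf_le x⁻¹))
    have := S.sup_min x _ h1
    omega
  · apply S.inf_max
    exact S.mem_of_eq (show _ = S.cjf (-(S.sup x)) (x⁻¹ * S.Δ ^ S.sup x)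
      by unfold cjf; group) (S.cjf_pos _ (S.le_sup x))

lemma wedge_mul (c a b : G) : c * S.wedge a b = S.wedge (c * a) (c * b) := by
  apply S.le_antisymm'
  · show (c * S.wedge a b)⁻¹ * S.wedge (c * a) (c * b) ∈ S.P
    exact S.le_wedge _ _ _ (S.mem_of_eq (by group) (S.wedge_le_left a b))
      (S.mem_of_eq (by group) (S.wedge_le_right a b))
  · show (S.wedge (c * a) (c * b))⁻¹ * (c * S.wedge a b) ∈ S.P
    have h : (c⁻¹ * S.wedge (c * a) (c * b))⁻¹ * S.wedge a b ∈ S.P :=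
      S.le_wedge a b _ (S.mem_of_eq (by group) (S.wedge_le_left (c * a) (c * b)))
        (S.mem_of_eq (by group) (S.wedge_le_right (c * a) (c * b)))
    exact S.mem_of_eq (by group) h

lemma cjf_wedge (k : ℤ) (a b : G) :
    S.cjf k (S.wedge a b) = S.wedge (S.cjf k a) (S.cjf k b) := by
  apply S.le_antisymm'
  · show (S.cjf k (S.wedge a b))⁻¹ * S.wedge (S.cjf k a) (S.cjf k b) ∈ S.P
    refine S.le_wedge _ _ _ ?_ ?_
    · exact S.mem_of_eq (show _ = S.cjf k ((S.wedge a b)⁻¹ * a) by unfold cjf; group)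
        (S.cjf_pos k (S.wedge_le_left a b))
    · exact S.mem_of_eq (show _ = S.cjf k ((S.wedge a b)⁻¹ * b) by unfold cjf; group)
        (S.cjf_pos k (S.wedge_le_right a b))
  · show (S.wedge (S.cjf k a) (S.cjf k b))⁻¹ * S.cjf k (S.wedge a b) ∈ S.P
    have h1 : (S.cjf (-k) (S.wedge (S.cjf k a) (S.cjf k b)))⁻¹ * S.wedge a b ∈ S.P := by
      refine S.le_wedge a b _ ?_ ?_
      · exact S.mem_of_eq (show _ = S.cjf (-k) ((S.wedge (S.cjf k a) (S.cjf k b))⁻¹ * S.cjf k a)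
          by unfold cjf; group) (S.cjf_pos (-k) (S.wedge_le_left _ _))
      · exact S.mem_of_eq (show _ = S.cjf (-k) ((S.wedge (S.cjf k a) (S.cjf k b))⁻¹ * S.cjf k b)
          by unfold cjf; group) (S.cjf_pos (-k) (S.wedge_le_right _ _))
    have h2 := S.cjf_pos k h1
    exact S.mem_of_eq (show _ = S.cjf k ((S.cjf (-k) (S.wedge (S.cjf k a) (S.cjf k b)))⁻¹ * S.wedge a b)
      by unfold cjf; group) h2



lemma iota_cjf (k : ℤ) (x : G) : S.iota (S.cjf k x) = S.cjf k (S.iota x) := by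
  unfold iota
  rw [S.inf_cjf, S.cjf_wedge, S.cjf_delta]
  congr 1
  unfold cjf; group

lemma cjf_inv (k : ℤ) (x : G) : (S.cjf k x)⁻¹ = S.cjf k x⁻¹ := by
  unfold cjf; group

lemma pp_cjf (k : ℤ) (x : G) : S.pp (S.cjf k x) = S.cjf k (S.pp x) := by
  unfold pp
  rw [S.cjf_inv, S.iota_cjf, S.iota_cjf, S.cjf_wedge]

lemma lemA {x γ : G} (hγ : γ ∈ S.P) (h : S.inf (γ⁻¹ * x * γ) = S.inf x) :
    S.le (S.iota x) (γ * S.iota (γ⁻¹ * x * γ)) := by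
  have h1 : γ * S.iota (γ⁻¹ * x * γ) =
      S.wedge (x * γ * S.Δ ^ (-S.inf x)) (γ * S.Δ) := by
    unfold iota
    rw [h, S.wedge_mul]
    congr 1
    group
  rw [h1]
  show (S.iota x)⁻¹ * S.wedge (x * γ * S.Δ ^ (-S.inf x)) (γ * S.Δ) ∈ S.P
  refine S.le_wedge _ _ _ ?_ ?_
  · refine S.le_trans' (S.wedge_le_left (x * S.Δ ^ (-S.inf x)) S.Δ) ?_
    show (x * S.Δ ^ (-S.inf x))⁻¹ * (x * γ * S.Δ ^ (-S.inf x)) ∈ S.P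
    exact S.mem_of_eq (show _ = S.cjf (-S.inf x) γ by unfold cjf; group)
      (S.cjf_pos _ hγ)
  · refine S.le_trans' (S.wedge_le_right (x * S.Δ ^ (-S.inf x)) S.Δ) ?_
    show S.Δ⁻¹ * (γ * S.Δ) ∈ S.P
    exact S.mem_of_eq (by group) (S.conj_pos γ hγ)

lemma lemB {x γ : G} (hγ : γ ∈ S.P) (h : S.sup (γ⁻¹ * x * γ) = S.sup x) :
    S.le (S.iota x⁻¹) (γ * S.iota ((γ⁻¹ * x * γ)⁻¹)) := by
  have e1 : S.inf ((γ⁻¹ * x * γ)⁻¹) = -S.sup x := by rw [S.inf_inv, h]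
  have e2 : S.inf x⁻¹ = -S.sup x := S.inf_inv x
  have h1 : γ * S.iota ((γ⁻¹ * x * γ)⁻¹) =
      S.wedge (x⁻¹ * γ * S.Δ ^ (S.sup x)) (γ * S.Δ) := by
    unfold iota
    rw [e1, S.wedge_mul, neg_neg]
    congr 1
    group
  rw [h1]
  show (S.iota x⁻¹)⁻¹ * S.wedge (x⁻¹ * γ * S.Δ ^ (S.sup x)) (γ * S.Δ) ∈ S.P
  refine S.le_wedge _ _ _ ?_ ?_
  · refine S.le_trans' (b := x⁻¹ * S.Δ ^ (-S.inf x⁻¹)) (S.wedge_le_left _ S.Δ) ?_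
    · show (x⁻¹ * S.Δ ^ (-S.inf x⁻¹))⁻¹ * (x⁻¹ * γ * S.Δ ^ (S.sup x)) ∈ S.P
      rw [e2, neg_neg]
      exact S.mem_of_eq (show _ = S.cjf (S.sup x) γ by unfold cjf; group)
        (S.cjf_pos _ hγ)
  · refine S.le_trans' (S.wedge_le_right (x⁻¹ * S.Δ ^ (-S.inf x⁻¹)) S.Δ) ?_
    show S.Δ⁻¹ * (γ * S.Δ) ∈ S.P
    exact S.mem_of_eq (by group) (S.conj_pos γ hγ)

lemma pp_le {x γ : G} (hγ : γ ∈ S.P) (h1 : S.inf (γ⁻¹ * x * γ) = S.inf x)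
    (h2 : S.sup (γ⁻¹ * x * γ) = S.sup x) :
    S.le (S.pp x) (γ * S.pp (γ⁻¹ * x * γ)) := by
  have he : γ * S.pp (γ⁻¹ * x * γ) =
      S.wedge (γ * S.iota (γ⁻¹ * x * γ)) (γ * S.iota ((γ⁻¹ * x * γ)⁻¹)) := by
    unfold pp; rw [S.wedge_mul]
  rw [he]
  show (S.pp x)⁻¹ * _ ∈ S.P
  refine S.le_wedge _ _ _ ?_ ?_
  · exact S.le_trans' (S.wedge_le_left (S.iota x) (S.iota x⁻¹)) (S.lemA hγ h1)
  · exact S.le_trans' (S.wedge_le_right (S.iota x) (S.iota x⁻¹)) (S.lemB hγ h2)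


end Aux

end Garside

open Garside in
theorem statement10 {G : Type*} [Group G] (S : Garside G) (x α : G)
    (h1 : S.inf (α⁻¹ * x * α) = S.inf x) (h2 : S.sup (α⁻¹ * x * α) = S.sup x) :
    S.inf α ≤ S.inf (S.transport x α) ∧ S.sup (S.transport x α) ≤ S.sup α ∧
      S.len (S.transport x α) ≤ S.len α ∧
      (S.le 1 α ∧ S.le α S.Δ →
        S.le 1 (S.transport x α) ∧ S.le (S.transport x α) S.Δ) := by
  have hinf : S.inf α ≤ S.inf (S.transport x α) := by
    have hγ : (S.Δ ^ S.inf α)⁻¹ * α ∈ S.P := S.inf_le α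
    have hc : ((S.Δ ^ S.inf α)⁻¹ * α)⁻¹ * S.cjf (S.inf α) x * ((S.Δ ^ S.inf α)⁻¹ * α)
        = α⁻¹ * x * α := by unfold Garside.cjf; group
    have hi : S.inf (((S.Δ ^ S.inf α)⁻¹ * α)⁻¹ * S.cjf (S.inf α) x *
        ((S.Δ ^ S.inf α)⁻¹ * α)) = S.inf (S.cjf (S.inf α) x) := by
      rw [hc, h1, S.inf_cjf]
    have hs : S.sup (((S.Δ ^ S.inf α)⁻¹ * α)⁻¹ * S.cjf (S.inf α) x *
        ((S.Δ ^ S.inf α)⁻¹ * α)) = S.sup (S.cjf (S.inf α) x) := by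
      rw [hc, h2, S.sup_cjf]
    have key := S.pp_le hγ hi hs
    rw [hc, S.pp_cjf] at key
    apply S.inf_max
    refine S.mem_of_eq (show (S.Δ ^ S.inf α)⁻¹ * S.transport x α =
        (S.cjf (S.inf α) (S.pp x))⁻¹ *
          ((S.Δ ^ S.inf α)⁻¹ * α * S.pp (α⁻¹ * x * α)) from ?_) key
    unfold Garside.transport Garside.cjf
    group
  have hsup : S.sup (S.transport x α) ≤ S.sup α := by
    have hγ : α⁻¹ * S.Δ ^ S.sup α ∈ S.P := S.le_sup α
    have hc : (α⁻¹ * S.Δ ^ S.sup α)⁻¹ * (α⁻¹ * x * α) * (α⁻¹ * S.Δ ^ S.sup α)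
        = S.cjf (S.sup α) x := by unfold Garside.cjf; group
    have hi : S.inf ((α⁻¹ * S.Δ ^ S.sup α)⁻¹ * (α⁻¹ * x * α) * (α⁻¹ * S.Δ ^ S.sup α))
        = S.inf (α⁻¹ * x * α) := by
      rw [hc, S.inf_cjf, h1]
    have hs : S.sup ((α⁻¹ * S.Δ ^ S.sup α)⁻¹ * (α⁻¹ * x * α) * (α⁻¹ * S.Δ ^ S.sup α))
        = S.sup (α⁻¹ * x * α) := by
      rw [hc, S.sup_cjf, h2]
    have key := S.pp_le hγ hi hs
    rw [hc, S.pp_cjf] at key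
    apply S.sup_min
    refine S.mem_of_eq (show (S.transport x α)⁻¹ * S.Δ ^ S.sup α =
        (S.pp (α⁻¹ * x * α))⁻¹ *
          (α⁻¹ * S.Δ ^ S.sup α * S.cjf (S.sup α) (S.pp x)) from ?_) key
    unfold Garside.transport Garside.cjf
    group
  refine ⟨hinf, hsup, by simp only [Garside.len]; omega, ?_⟩
  rintro ⟨ha1, ha2⟩
  have hα : α ∈ S.P := S.mem_of_eq (by group) ha1
  have h0 : (0:ℤ) ≤ S.inf α := S.inf_max α 0 (S.mem_of_eq (by group) hα)
  have hs1 : S.sup α ≤ 1 := S.sup_min α 1 (S.mem_of_eq (by group) ha2)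
  constructor
  · show (1:G)⁻¹ * S.transport x α ∈ S.P
    have hm := S.P.mul_mem (S.zpow_mem (k := S.inf (S.transport x α)) (by omega))
      (S.inf_le (S.transport x α))
    exact S.mem_of_eq (by group) hm
  · show (S.transport x α)⁻¹ * S.Δ ∈ S.P
    have hm := S.P.mul_mem (S.le_sup (S.transport x α))
      (S.zpow_mem (k := 1 - S.sup (S.transport x α)) (by omega))
    refine S.mem_of_eq ?_ hm
    group

end GarsidePaper
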